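/- Let Ψ : ℝⁿ → ℝ be differentiable with L-Lipschitz gradient on a convex set containing x and x + αd. Suppose d satisfies, for a group partition 𝒢 split into sets G̃ and Ĝ: [d]_g = −[∇Ψ(x)]_g for g ∈ G̃, [d]_g = −[x]_g/α for g ∈ Ĝ, and [d]_g = 0 otherwise, where for each g ∈ Ĝ we have (1−ε)‖[x]_g‖² ≤ α[∇Ψ(x)]_gᵀ[x]_g for some ε ∈ [0,1). Then Ψ(x + αd) ≤ Ψ(x) − (α − α²L/2)·Σ_{g∈G̃}‖[∇Ψ(x)]_g‖² − ((1−ε)/α − L/2)·Σ_{g∈Ĝ}‖[x]_g‖². -/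

import Mathlib

open scoped RealInnerProductSpace

lemma descent_lemma {F : Type*} [NormedAddCommGroup F] [InnerProductSpace ℝ F]
    [CompleteSpace F]
    (Ψ : F → ℝ) (s : Set F) (hconv : Convex ℝ s)
    (hdiff : ∀ y ∈ s, DifferentiableAt ℝ Ψ y)
    (L : ℝ) (hL : 0 ≤ L)
    (hLip : ∀ y ∈ s, ∀ z ∈ s, ‖gradient Ψ y - gradient Ψ z‖ ≤ L * ‖y - z‖)
    (x y : F) (hx : x ∈ s) (hy : y ∈ s) :
    Ψ y ≤ Ψ x + ⟪gradient Ψ x, y - x⟫ + L / 2 * ‖y - x‖ ^ 2 := by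
  set v := y - x with hv
  have hmem : ∀ t ∈ Set.Icc (0:ℝ) 1, x + t • v ∈ s := by
    intro t ht
    have := hconv hx hy (by linarith [ht.2] : (0:ℝ) ≤ 1 - t) ht.1 (by ring)
    convert this using 1
    simp [hv]
    module
  set φ : ℝ → ℝ := fun t => ⟪gradient Ψ (x + t • v), v⟫ with hφ
  have hderiv : ∀ t ∈ Set.Icc (0:ℝ) 1, HasDerivAt (fun t : ℝ => Ψ (x + t • v)) (φ t) t := by
    intro t ht
    have hline : HasDerivAt (fun t : ℝ => x + t • v) v t := by
      simpa using ((hasDerivAt_id t).smul_const v).const_add x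
    have hΨ := (hdiff _ (hmem t ht)).hasGradientAt
    have := hΨ.hasFDerivAt.comp_hasDerivAt t hline
    have h2 : HasDerivAt (fun t : ℝ => Ψ (x + t • v)) ⟪gradient Ψ (x + t • v), v⟫ t := this
    simpa [hφ, InnerProductSpace.toDual_apply_apply] using h2
  have hcont : ContinuousOn φ (Set.Icc 0 1) := by
    have hgc : ContinuousOn (gradient Ψ) s := by
      intro z hz
      refine Metric.continuousWithinAt_iff.2 (fun e he => ?_)
      refine ⟨e / (L + 1), by positivity, fun w hw hd => ?_⟩
      have h1 := hLip w hw z hz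
      have : dist (gradient Ψ w) (gradient Ψ z) ≤ L * dist w z := by
        simpa [dist_eq_norm] using h1
      have hLe : L * dist w z < e := by
        have : L * dist w z ≤ (L + 1) * dist w z := by nlinarith [dist_nonneg (x := w) (y := z)]
        calc L * dist w z ≤ (L+1) * dist w z := this
          _ < (L+1) * (e / (L+1)) := by
              apply mul_lt_mul_of_pos_left hd (by linarith)
          _ = e := by field_simp
      linarith
    have hlinec : ContinuousOn (fun t : ℝ => x + t • v) (Set.Icc 0 1) :=
      (continuous_const.add (continuous_id.smul continuous_const)).continuousOn
    exact ((hgc.comp hlinec hmem).inner continuousOn_const)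
  have hint : IntervalIntegrable φ MeasureTheory.volume 0 1 :=
    (hcont.mono (by rw [Set.uIcc_of_le zero_le_one])).intervalIntegrable
  have hftc : ∫ t in (0:ℝ)..1, φ t = Ψ (x + (1:ℝ) • v) - Ψ (x + (0:ℝ) • v) := by
    have := intervalIntegral.integral_eq_sub_of_hasDerivAt
      (f := fun t : ℝ => Ψ (x + t • v)) (f' := φ)
      (by intro t ht; exact hderiv t (by rwa [Set.uIcc_of_le zero_le_one] at ht)) hint
    simpa using this
  have hbound : ∀ t ∈ Set.Icc (0:ℝ) 1, φ t ≤ ⟪gradient Ψ x, v⟫ + L * ‖v‖ ^ 2 * t := by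
    intro t ht
    have h1 : φ t - ⟪gradient Ψ x, v⟫ = ⟪gradient Ψ (x + t • v) - gradient Ψ x, v⟫ := by
      simp [hφ, inner_sub_left]
    have h2 : ⟪gradient Ψ (x + t • v) - gradient Ψ x, v⟫ ≤
        ‖gradient Ψ (x + t • v) - gradient Ψ x‖ * ‖v‖ := real_inner_le_norm _ _
    have h3 : ‖gradient Ψ (x + t • v) - gradient Ψ x‖ ≤ L * (t * ‖v‖) := by
      have := hLip _ (hmem t ht) _ hx
      simpa [norm_smul, abs_of_nonneg ht.1] using this
    have h4 : ‖gradient Ψ (x + t • v) - gradient Ψ x‖ * ‖v‖ ≤ L * (t * ‖v‖) * ‖v‖ :=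
      mul_le_mul_of_nonneg_right h3 (norm_nonneg _)
    nlinarith [norm_nonneg v]
  have hintle : ∫ t in (0:ℝ)..1, φ t ≤
      ∫ t in (0:ℝ)..1, (⟪gradient Ψ x, v⟫ + L * ‖v‖ ^ 2 * t) := by
    apply intervalIntegral.integral_mono_on zero_le_one hint
    · exact (intervalIntegrable_const).add ((intervalIntegral.intervalIntegrable_id).const_mul _)
    · exact hbound
  have hval : ∫ t in (0:ℝ)..1, (⟪gradient Ψ x, v⟫ + L * ‖v‖ ^ 2 * t)
      = ⟪gradient Ψ x, v⟫ + L / 2 * ‖v‖ ^ 2 := by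
    rw [intervalIntegral.integral_add intervalIntegrable_const
      ((intervalIntegral.intervalIntegrable_id).const_mul _),
      intervalIntegral.integral_const_mul, integral_id, intervalIntegral.integral_const]
    simp
    ring
  have : Ψ (x + (1:ℝ) • v) - Ψ (x + (0:ℝ) • v) ≤ ⟪gradient Ψ x, v⟫ + L / 2 * ‖v‖ ^ 2 := by
    rw [← hftc]; rw [hval] at hintle; exact hintle
  have hy' : x + (1:ℝ) • v = y := by simp [hv]
  simp only [one_smul, zero_smul, add_zero, hy'] at this
  have : Ψ y - Ψ x ≤ ⟪gradient Ψ x, v⟫ + L / 2 * ‖v‖ ^ 2 := by simpa [hv] using this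
  linarith

theorem halfspace_step_sufficient_decrease
    {ι : Type*} [Fintype ι] (m : ι → ℕ)
    (Ψ : PiLp 2 (fun g : ι => EuclideanSpace ℝ (Fin (m g))) → ℝ)
    (s : Set (PiLp 2 (fun g : ι => EuclideanSpace ℝ (Fin (m g)))))
    (hconv : Convex ℝ s)
    (hdiff : ∀ y ∈ s, DifferentiableAt ℝ Ψ y)
    (L α ε : ℝ) (hL : 0 < L) (hα : 0 < α) (hε0 : 0 ≤ ε) (hε1 : ε < 1)
    (hLip : ∀ y ∈ s, ∀ z ∈ s, ‖gradient Ψ y - gradient Ψ z‖ ≤ L * ‖y - z‖)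
    (x d : PiLp 2 (fun g : ι => EuclideanSpace ℝ (Fin (m g))))
    (hx : x ∈ s) (hxd : x + α • d ∈ s)
    (Gt Gh : Finset ι) (hdisj : Disjoint Gt Gh)
    (hdGt : ∀ g ∈ Gt, d g = -((gradient Ψ x) g))
    (hdGh : ∀ g ∈ Gh, d g = -(α⁻¹ • x g))
    (hd0 : ∀ g, g ∉ Gt → g ∉ Gh → d g = 0)
    (hhalf : ∀ g ∈ Gh, (1 - ε) * ‖x g‖ ^ 2 ≤ α * ⟪(gradient Ψ x) g, x g⟫) :
    Ψ (x + α • d) ≤ Ψ x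
      - (α - α ^ 2 * L / 2) * ∑ g ∈ Gt, ‖(gradient Ψ x) g‖ ^ 2
      - ((1 - ε) / α - L / 2) * ∑ g ∈ Gh, ‖x g‖ ^ 2 := by
  classical
  set A := ∑ g ∈ Gt, ‖(gradient Ψ x) g‖ ^ 2 with hA
  set B := ∑ g ∈ Gh, ‖x g‖ ^ 2 with hB
  set C := ∑ g ∈ Gh, ⟪(gradient Ψ x) g, x g⟫ with hC
  have key := descent_lemma Ψ s hconv hdiff L hL.le hLip x (x + α • d) hx hxd
  rw [add_sub_cancel_left] at key
  have hsum1 : ∑ g, ⟪(gradient Ψ x) g, d g⟫ = -A - α⁻¹ * C := by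
    rw [← Finset.sum_subset (Finset.subset_univ (Gt ∪ Gh)) (fun g _ hg => by
      rw [hd0 g (fun h => hg (Finset.mem_union_left _ h))
        (fun h => hg (Finset.mem_union_right _ h)), inner_zero_right])]
    rw [Finset.sum_union hdisj]
    have e1 : ∑ g ∈ Gt, ⟪(gradient Ψ x) g, d g⟫ = -A := by
      rw [hA, ← Finset.sum_neg_distrib]
      exact Finset.sum_congr rfl fun g hg => by
        rw [hdGt g hg, inner_neg_right, real_inner_self_eq_norm_sq]
    have e2 : ∑ g ∈ Gh, ⟪(gradient Ψ x) g, d g⟫ = -(α⁻¹ * C) := by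
      rw [hC, Finset.mul_sum, ← Finset.sum_neg_distrib]
      exact Finset.sum_congr rfl fun g hg => by
        rw [hdGh g hg, inner_neg_right, real_inner_smul_right]
    rw [e1, e2]; ring
  have hsum2 : ∑ g, ‖d g‖ ^ 2 = A + α⁻¹ ^ 2 * B := by
    rw [← Finset.sum_subset (Finset.subset_univ (Gt ∪ Gh)) (fun g _ hg => by
      rw [hd0 g (fun h => hg (Finset.mem_union_left _ h))
        (fun h => hg (Finset.mem_union_right _ h)), norm_zero]; ring)]
    rw [Finset.sum_union hdisj]
    have e1 : ∑ g ∈ Gt, ‖d g‖ ^ 2 = A := by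
      exact Finset.sum_congr rfl fun g hg => by rw [hdGt g hg, norm_neg]
    have e2 : ∑ g ∈ Gh, ‖d g‖ ^ 2 = α⁻¹ ^ 2 * B := by
      rw [hB, Finset.mul_sum]
      exact Finset.sum_congr rfl fun g hg => by
        rw [hdGh g hg, norm_neg, norm_smul, Real.norm_eq_abs,
          abs_of_pos (inv_pos.2 hα), mul_pow]
    rw [e1, e2]
  have hnormd : ‖d‖ ^ 2 = A + α⁻¹ ^ 2 * B := by
    rw [← hsum2, ← real_inner_self_eq_norm_sq d, PiLp.inner_apply]
    exact Finset.sum_congr rfl fun g _ => real_inner_self_eq_norm_sq _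
  have hinner : ⟪gradient Ψ x, α • d⟫ = α * (-A - α⁻¹ * C) := by
    rw [real_inner_smul_right, ← hsum1]
    exact congrArg (α * ·) (PiLp.inner_apply _ _)
  have hnormsq : ‖(α • d : PiLp 2 (fun g : ι => EuclideanSpace ℝ (Fin (m g))))‖ ^ 2
      = α ^ 2 * (A + α⁻¹ ^ 2 * B) := by
    rw [norm_smul, Real.norm_eq_abs, mul_pow, sq_abs, hnormd]
  have hhs : (1 - ε) * B ≤ α * C := by
    have h := Finset.sum_le_sum hhalf
    rw [← Finset.mul_sum, ← Finset.mul_sum] at h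
    exact h
  have hBnn : 0 ≤ B := Finset.sum_nonneg fun g _ => by positivity
  have hi : α * α⁻¹ = 1 := mul_inv_cancel₀ hα.ne'
  rw [hinner, hnormsq] at key
  rw [show (1 - ε) / α = (1 - ε) * α⁻¹ from div_eq_mul_inv _ _]
  have h3 : α⁻¹ * (α * C) = C := by rw [← mul_assoc, inv_mul_cancel₀ hα.ne', one_mul]
  have h2 : α⁻¹ * ((1 - ε) * B) ≤ C := by
    rw [← h3]; exact mul_le_mul_of_nonneg_left hhs (inv_nonneg.2 hα.le)
  have hi2 : α ^ 2 * α⁻¹ ^ 2 = 1 := by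
    rw [← mul_pow, hi, one_pow]
  have h4 : α * (α⁻¹ * C) = C := by rw [← mul_assoc, hi, one_mul]
  have h5 : α ^ 2 * (α⁻¹ ^ 2 * B) = B := by rw [← mul_assoc, hi2, one_mul]
  nlinarith [key, h2, h4, h5]
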